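/- Let K := ∩_{j=0}^n { u ∈ H : dist(u,V_j) ≤ ε_j } with ε_j > 0. If u₁, u₂ ∈ K, then the closed ball centered at u₀ := (u₁+u₂)/2 with radius r := (1/8)·min_{0≤j≤n} ε_j^{-1}·‖P_{V_j^⊥}(u₁) - P_{V_j^⊥}(u₂)‖² is entirely contained in K. -/

import Mathlib

private lemma stmt18_aux1 (a d e n1 n2 s : ℝ)
    (hpar : s * s + d * d = 2 * (n1 * n1 + n2 * n2)) (hna : a = (1/2) * s)
    (h1 : n1 ≤ e) (h2 : n2 ≤ e) (hn1 : 0 ≤ n1) (hn2 : 0 ≤ n2) :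
    4 * a ^ 2 + d ^ 2 ≤ 4 * e ^ 2 := by
  subst hna
  nlinarith [mul_self_le_mul_self hn1 h1, mul_self_le_mul_self hn2 h2]

private lemma stmt18_aux2 (x a d e R : ℝ) (h4 : 4 * a ^ 2 + d ^ 2 ≤ 4 * e ^ 2)
    (h6 : e * R ≤ d ^ 2 / 8) (h8 : e * x ≤ e * (a + R)) (he : 0 < e) : x ≤ e := by
  have h5 : 8 * (e * a) ≤ 8 * e ^ 2 - d ^ 2 := by nlinarith [sq_nonneg (e - a)]
  have h9 : e * x ≤ e * e := by nlinarith
  exact le_of_mul_le_mul_left h9 he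

/-- If `u₁, u₂ ∈ K := ∩_j {u : ‖P_{V_j^⊥}u‖ ≤ ε_j}`, then the closed ball centered at
`u₀ = (u₁ + u₂)/2` of radius
`r = (1/8)·min_j ε_j⁻¹·‖P_{V_j^⊥}u₁ - P_{V_j^⊥}u₂‖²` is contained in `K`. -/
theorem stmt18 {H : Type*} [NormedAddCommGroup H] [InnerProductSpace ℝ H] [CompleteSpace H]
    (n : ℕ) (V : Fin (n + 1) → Submodule ℝ H) [∀ j, FiniteDimensional ℝ (V j)]
    (hmono : ∀ i j : Fin (n + 1), i ≤ j → V i ≤ V j)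
    (ε : Fin (n + 1) → ℝ) (hε : ∀ j, 0 < ε j)
    (u₁ u₂ : H)
    (h₁ : ∀ j, ‖(Submodule.orthogonalProjectionOnto (V j)ᗮ u₁ : H)‖ ≤ ε j)
    (h₂ : ∀ j, ‖(Submodule.orthogonalProjectionOnto (V j)ᗮ u₂ : H)‖ ≤ ε j) :
    Metric.closedBall ((1 / 2 : ℝ) • (u₁ + u₂))
        ((1 / 8) * ⨅ j : Fin (n + 1),
          (ε j)⁻¹ * ‖(Submodule.orthogonalProjectionOnto (V j)ᗮ u₁ : H) -
            (Submodule.orthogonalProjectionOnto (V j)ᗮ u₂ : H)‖ ^ 2) ⊆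
      {u : H | ∀ j, ‖(Submodule.orthogonalProjectionOnto (V j)ᗮ u : H)‖ ≤ ε j} := by
  intro u hu j
  set u₀ : H := (1 / 2 : ℝ) • (u₁ + u₂) with hu₀
  set P := Submodule.orthogonalProjectionOnto (V j)ᗮ with hP
  set a₁ : H := (P u₁ : H) with ha₁
  set a₂ : H := (P u₂ : H) with ha₂
  have hε' := hε j
  have hR : ‖u - u₀‖ ≤ (1 / 8) * ⨅ j : Fin (n + 1),
      (ε j)⁻¹ * ‖(Submodule.orthogonalProjectionOnto (V j)ᗮ u₁ : H) -
        (Submodule.orthogonalProjectionOnto (V j)ᗮ u₂ : H)‖ ^ 2 := by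
    simpa [dist_eq_norm] using hu
  have hinf : (⨅ j : Fin (n + 1),
      (ε j)⁻¹ * ‖(Submodule.orthogonalProjectionOnto (V j)ᗮ u₁ : H) -
        (Submodule.orthogonalProjectionOnto (V j)ᗮ u₂ : H)‖ ^ 2) ≤ (ε j)⁻¹ * ‖a₁ - a₂‖ ^ 2 :=
    ciInf_le (Finite.bddBelow_range _) j
  -- projection of midpoint
  have hmid : (P u₀ : H) = (1 / 2 : ℝ) • (a₁ + a₂) := by
    rw [hu₀, map_smul, map_add]
    push_cast
    rfl
  have hna : ‖(P u₀ : H)‖ = (1 / 2 : ℝ) * ‖a₁ + a₂‖ := by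
    rw [hmid, norm_smul]
    norm_num
  -- parallelogram
  have hpar := parallelogram_law_with_norm ℝ a₁ a₂
  -- projection contraction
  have hcontr : ‖(P u : H) - (P u₀ : H)‖ ≤ ‖u - u₀‖ := by
    have : (P u : H) - (P u₀ : H) = (P (u - u₀) : H) := by
      rw [map_sub]; push_cast; ring
    rw [this]
    calc ‖(P (u - u₀) : H)‖ = ‖P (u - u₀)‖ := rfl
      _ ≤ ‖P‖ * ‖u - u₀‖ := P.le_opNorm _
      _ ≤ 1 * ‖u - u₀‖ := by
          exact mul_le_mul_of_nonneg_right (Submodule.orthogonalProjectionOnto_norm_le _) (norm_nonneg _)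
      _ = ‖u - u₀‖ := one_mul _
  have htri : ‖(P u : H)‖ ≤ ‖(P u₀ : H)‖ + ‖(P u : H) - (P u₀ : H)‖ := by
    have := norm_add_le ((P u₀ : H)) ((P u : H) - (P u₀ : H))
    simpa using this
  have he1 : ‖a₁‖ ≤ ε j := h₁ j
  have he2 : ‖a₂‖ ≤ ε j := h₂ j
  have hεinv : ε j * (ε j)⁻¹ = 1 := mul_inv_cancel₀ hε'.ne'
  set e := ε j with he
  set a := ‖(P u₀ : H)‖ with ha
  set d := ‖a₁ - a₂‖ with hdd
  set R := ‖u - u₀‖ with hRR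
  have h4 : 4 * a ^ 2 + d ^ 2 ≤ 4 * e ^ 2 :=
    stmt18_aux1 a d e ‖a₁‖ ‖a₂‖ ‖a₁ + a₂‖ (by simpa only [sq] using hpar) hna he1 he2 (norm_nonneg _) (norm_nonneg _)
  have h6 : e * R ≤ d ^ 2 / 8 := by
    have h := mul_le_mul_of_nonneg_left
      (hR.trans (mul_le_mul_of_nonneg_left hinf (by norm_num))) hε'.le
    calc e * R ≤ e * ((1 / 8) * (e⁻¹ * d ^ 2)) := h
      _ = (e * e⁻¹) * (d ^ 2 / 8) := by ring
      _ = d ^ 2 / 8 := by rw [hεinv]; ring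
  have h7 : ‖(P u : H)‖ ≤ a + R := by linarith [htri, hcontr]
  have h8 : e * ‖(P u : H)‖ ≤ e * (a + R) := mul_le_mul_of_nonneg_left h7 hε'.le
  exact stmt18_aux2 _ a d e R h4 h6 h8 hε'
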